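/- Let $\{\xi(z):z\in\mathbb{Z}^d\}$ be i.i.d. with distribution function $F(x)=1-e^{-x^\gamma}$, $x\ge0$, $0<\gamma\le1$, and $M_r=\max_{|z|\le r}\xi(z)$. Then almost surely $M_r\ge (d\log r)^{1/\gamma}+\gamma^{-1}(d\log r)^{1/\gamma-1}\log\log r$ for infinitely many $r$ (i.e., for a sequence $r_n\to\infty$). -/

import Mathlib

open MeasureTheory ProbabilityTheory Filter

/-- ℓ¹-norm of a lattice point, as a real number. -/
noncomputable def latticeNorm {d : ℕ} (z : Fin d → ℤ) : ℝ := ∑ j, |(z j : ℝ)|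

section WbAux

lemma aux_iIndepSet_preimage {Ω ι : Type*} [MeasureSpace Ω]
    (ξ : ι → Ω → ℝ) (hmeas : ∀ z, Measurable (ξ z))
    (hindep : iIndepFun ξ ℙ)
    (e : ℕ → ι) (he : Function.Injective e)
    (S : ℕ → Set ℝ) (hS : ∀ n, MeasurableSet (S n)) :
    iIndepSet (fun n => ξ (e n) ⁻¹' S n) ℙ := by
  classical
  rw [ProbabilityTheory.iIndepSet_iff_meas_biInter (fun n => (hmeas _) (hS n))]
  intro T
  set B : ι → Set ℝ := fun z => if h : ∃ n ∈ T, e n = z then S h.choose else Set.univ with hB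
  have hBz : ∀ n ∈ T, B (e n) = S n := by
    intro n hn
    have h : ∃ m ∈ T, e m = e n := ⟨n, hn, rfl⟩
    have : h.choose = n := he h.choose_spec.2
    simp only [hB, dif_pos h, this]
  have hmeasB : ∀ z, MeasurableSet[MeasurableSpace.comap (ξ z) inferInstance] (ξ z ⁻¹' B z) := by
    intro z
    refine ⟨B z, ?_, rfl⟩
    by_cases h : ∃ n ∈ T, e n = z
    · simp only [hB, dif_pos h]; exact hS _
    · simp only [hB, dif_neg h]; exact MeasurableSet.univ
  have key := hindep.meas_biInter (S := T.image e)
    (s := fun z => ξ z ⁻¹' B z) (fun z _ => hmeasB z)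
  rw [Finset.set_biInter_finset_image, Finset.prod_image (fun n _ m _ h => he h)] at key
  calc ℙ (⋂ n ∈ T, ξ (e n) ⁻¹' S n) = ℙ (⋂ n ∈ T, ξ (e n) ⁻¹' B (e n)) := by
        congr 1; exact Set.iInter₂_congr (fun n hn => by rw [hBz n hn])
    _ = ∏ n ∈ T, ℙ (ξ (e n) ⁻¹' B (e n)) := key
    _ = ∏ n ∈ T, ℙ (ξ (e n) ⁻¹' S n) := Finset.prod_congr rfl (fun n hn => by rw [hBz n hn])

noncomputable def wbEnum (d : ℕ) (n : ℕ) : Fin d → ℤ :=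
  if h : n.unpair.2 < (2 ^ n.unpair.1) ^ d then
    fun j => (if (j : ℕ) = 0 then ((2 : ℤ) ^ n.unpair.1) else 0)
      + ((finFunctionFinEquiv.symm ⟨n.unpair.2, h⟩ j : ℕ) : ℤ)
  else fun j => if (j : ℕ) = 0 then -(n + 1 : ℤ) else 0

lemma wb_nat_pow_inj {k k' a a' : ℕ} (ha : a < 2 ^ k) (ha' : a' < 2 ^ k')
    (h : 2 ^ k + a = 2 ^ k' + a') : k = k' := by
  rcases lt_trichotomy k k' with h1 | h1 | h1
  · exfalso
    have h2 : (2:ℕ) ^ (k+1) ≤ 2 ^ k' := Nat.pow_le_pow_right (by norm_num) h1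
    have : (2:ℕ) ^ (k+1) = 2^k + 2^k := by ring
    omega
  · exact h1
  · exfalso
    have h2 : (2:ℕ) ^ (k'+1) ≤ 2 ^ k := Nat.pow_le_pow_right (by norm_num) h1
    have : (2:ℕ) ^ (k'+1) = 2^k' + 2^k' := by ring
    omega

lemma wb_good_inj {d : ℕ} (hd : 1 ≤ d) {k k' : ℕ}
    {i : Fin ((2 ^ k) ^ d)} {i' : Fin ((2 ^ k') ^ d)}
    (h : (fun j : Fin d => (if (j : ℕ) = 0 then ((2 : ℤ) ^ k) else 0)
        + ((finFunctionFinEquiv.symm i j : ℕ) : ℤ))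
      = fun j : Fin d => (if (j : ℕ) = 0 then ((2 : ℤ) ^ k') else 0)
        + ((finFunctionFinEquiv.symm i' j : ℕ) : ℤ)) :
    k = k' ∧ (i : ℕ) = (i' : ℕ) := by
  have h0 := congrFun h ⟨0, hd⟩
  simp only [Fin.val_mk, if_true] at h0
  have hk : k = k' := by
    refine wb_nat_pow_inj (finFunctionFinEquiv.symm i ⟨0, hd⟩).isLt
      (finFunctionFinEquiv.symm i' ⟨0, hd⟩).isLt ?_
    exact_mod_cast h0
  subst hk
  refine ⟨rfl, ?_⟩
  have : finFunctionFinEquiv.symm i = finFunctionFinEquiv.symm i' := by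
    funext j
    have hj := congrFun h j
    refine Fin.ext ?_
    by_cases hj0 : (j : ℕ) = 0
    · rw [if_pos hj0] at hj
      exact_mod_cast add_left_cancel hj
    · rw [if_neg hj0, zero_add, zero_add] at hj
      exact_mod_cast hj
  exact congrArg Fin.val (finFunctionFinEquiv.symm.injective this)

lemma wbEnum_injective (d : ℕ) (hd : 1 ≤ d) : Function.Injective (wbEnum d) := by
  intro n m h
  unfold wbEnum at h
  by_cases hn : n.unpair.2 < (2 ^ n.unpair.1) ^ d <;>
    by_cases hm : m.unpair.2 < (2 ^ m.unpair.1) ^ d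
  · rw [dif_pos hn, dif_pos hm] at h
    obtain ⟨hk, hi⟩ := wb_good_inj hd h
    have hup : n.unpair = m.unpair := Prod.ext hk hi
    have := congrArg (fun p : ℕ × ℕ => Nat.pair p.1 p.2) hup
    simpa [Nat.pair_unpair] using this
  · exfalso
    rw [dif_pos hn, dif_neg hm] at h
    have h0 := congrFun h ⟨0, hd⟩
    simp only [Fin.val_mk, if_true] at h0
    have h1 : (0:ℤ) < 2 ^ n.unpair.1
        + ((finFunctionFinEquiv.symm ⟨n.unpair.2, hn⟩ ⟨0, hd⟩ : ℕ) : ℤ) := by positivity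
    rw [h0] at h1
    omega
  · exfalso
    rw [dif_neg hn, dif_pos hm] at h
    have h0 := congrFun h ⟨0, hd⟩
    simp only [Fin.val_mk, if_true] at h0
    have h1 : (0:ℤ) < 2 ^ m.unpair.1
        + ((finFunctionFinEquiv.symm ⟨m.unpair.2, hm⟩ ⟨0, hd⟩ : ℕ) : ℤ) := by positivity
    rw [← h0] at h1
    omega
  · rw [dif_neg hn, dif_neg hm] at h
    have h0 := congrFun h ⟨0, hd⟩
    simp only [Fin.val_mk, if_true] at h0
    omega

noncomputable def wbR (d k : ℕ) : ℝ := (2 * d + 1) * 2 ^ k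

noncomputable def wbThr (d : ℕ) (γ : ℝ) (k : ℕ) : ℝ :=
  (d * Real.log (wbR d k)) ^ (1 / γ)
    + γ⁻¹ * (d * Real.log (wbR d k)) ^ (1 / γ - 1) * Real.log (Real.log (wbR d k))

lemma wbEnum_norm_le (d n : ℕ) (hgood : n.unpair.2 < (2 ^ n.unpair.1) ^ d) :
    latticeNorm (wbEnum d n) ≤ wbR d n.unpair.1 := by
  have hcoord : ∀ j : Fin d, |((wbEnum d n j : ℤ) : ℝ)| ≤ 2 * 2 ^ n.unpair.1 := by
    intro j
    rw [wbEnum, dif_pos hgood]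
    set a : ℤ := ((finFunctionFinEquiv.symm ⟨n.unpair.2, hgood⟩ j : ℕ) : ℤ) with ha
    have ha0 : (0:ℤ) ≤ a := by positivity
    have ha1 : a ≤ 2 ^ n.unpair.1 := by
      have := (finFunctionFinEquiv.symm ⟨n.unpair.2, hgood⟩ j).isLt
      rw [ha]; exact_mod_cast this.le
    have ha0R : (0:ℝ) ≤ (a:ℝ) := by exact_mod_cast ha0
    have ha1R : (a:ℝ) ≤ 2 ^ n.unpair.1 := by exact_mod_cast ha1
    split_ifs with hcond
    · rw [abs_of_nonneg (by push_cast; positivity)]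
      push_cast
      linarith
    · rw [zero_add]
      rw [abs_of_nonneg ha0R]
      have : (0:ℝ) < 2 ^ n.unpair.1 := by positivity
      linarith
  have hsum : latticeNorm (wbEnum d n) ≤ ∑ _j : Fin d, (2 * 2 ^ n.unpair.1 : ℝ) :=
    Finset.sum_le_sum (fun j _ => hcoord j)
  rw [Finset.sum_const, Finset.card_univ, Fintype.card_fin, nsmul_eq_mul] at hsum
  refine hsum.trans ?_
  rw [wbR]
  have : (0:ℝ) < 2 ^ n.unpair.1 := by positivity
  nlinarith

lemma wbR_ge_three (d : ℕ) (hd : 1 ≤ d) (k : ℕ) : (3:ℝ) ≤ wbR d k := by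
  rw [wbR]
  have h1 : (3:ℝ) ≤ 2 * d + 1 := by
    have : (1:ℝ) ≤ d := by exact_mod_cast hd
    linarith
  have h2 : (1:ℝ) ≤ 2 ^ k := one_le_pow₀ (by norm_num : (1:ℝ) ≤ 2)
  nlinarith

lemma wbR_log_gt_one (d : ℕ) (hd : 1 ≤ d) (k : ℕ) : 1 < Real.log (wbR d k) := by
  have h3 : (3:ℝ) ≤ wbR d k := wbR_ge_three d hd k
  have : (1:ℝ) < Real.log 3 := by
    rw [Real.lt_log_iff_exp_lt (by norm_num : (0:ℝ) < 3)]
    exact lt_trans Real.exp_one_lt_d9 (by norm_num)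
  calc (1:ℝ) < Real.log 3 := this
    _ ≤ Real.log (wbR d k) := Real.log_le_log (by norm_num) h3

lemma wbThr_nonneg (d : ℕ) (hd : 1 ≤ d) {γ : ℝ} (hγ : γ ∈ Set.Ioc (0:ℝ) 1) (k : ℕ) :
    0 ≤ wbThr d γ k := by
  have hL : 1 < Real.log (wbR d k) := wbR_log_gt_one d hd k
  have hD : (0:ℝ) < d * Real.log (wbR d k) := by
    have : (1:ℝ) ≤ d := by exact_mod_cast hd
    nlinarith
  have hS : 0 ≤ Real.log (Real.log (wbR d k)) := Real.log_nonneg hL.le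
  have h1 : (0:ℝ) ≤ (d * Real.log (wbR d k)) ^ (1/γ) := Real.rpow_nonneg hD.le _
  have h2 : (0:ℝ) ≤ (d * Real.log (wbR d k)) ^ (1/γ - 1) := Real.rpow_nonneg hD.le _
  have hγ0 : (0:ℝ) < γ⁻¹ := inv_pos.2 hγ.1
  exact add_nonneg h1 (mul_nonneg (mul_nonneg hγ0.le h2) hS)

lemma wbThr_rpow_le (d : ℕ) (hd : 1 ≤ d) {γ : ℝ} (hγ : γ ∈ Set.Ioc (0:ℝ) 1) (k : ℕ) :
    (wbThr d γ k) ^ γ ≤ d * Real.log (wbR d k) + Real.log (Real.log (wbR d k)) := by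
  obtain ⟨hγ0, hγ1⟩ := hγ
  set L := Real.log (wbR d k) with hLdef
  have hL : 1 < L := wbR_log_gt_one d hd k
  set D : ℝ := d * L with hDdef
  have hD : (0:ℝ) < D := by
    have : (1:ℝ) ≤ d := by exact_mod_cast hd
    nlinarith
  have hS : 0 ≤ Real.log L := Real.log_nonneg hL.le
  set x : ℝ := Real.log L / (γ * D) with hxdef
  have hx : 0 ≤ x := by positivity
  set A : ℝ := D ^ (1/γ) with hAdef
  have hA : 0 ≤ A := Real.rpow_nonneg hD.le _
  have hB : D ^ (1/γ - 1) = A / D := by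
    rw [hAdef, eq_div_iff hD.ne', ← Real.rpow_add_one hD.ne']
    norm_num
  have hthr : wbThr d γ k = A * (1 + x) := by
    rw [wbThr, ← hLdef, ← hDdef, ← hAdef, hB, hxdef]
    field_simp
  have hAγ : A ^ γ = D := by
    rw [hAdef, ← Real.rpow_mul hD.le, one_div_mul_cancel hγ0.ne', Real.rpow_one]
  have hx1 : (-1:ℝ) ≤ x := by linarith
  calc (wbThr d γ k) ^ γ = (A * (1 + x)) ^ γ := by rw [hthr]
    _ = A ^ γ * (1 + x) ^ γ := Real.mul_rpow hA (by linarith)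
    _ = D * (1 + x) ^ γ := by rw [hAγ]
    _ ≤ D * (1 + γ * x) := by
        refine mul_le_mul_of_nonneg_left ?_ hD.le
        exact rpow_one_add_le_one_add_mul_self hx1 hγ0.le hγ1
    _ = D + Real.log L := by
        rw [hxdef]
        field_simp

lemma wbExp_bound (d : ℕ) (hd : 1 ≤ d) {γ : ℝ} (hγ : γ ∈ Set.Ioc (0:ℝ) 1) (k : ℕ) :
    ((wbR d k) ^ d * Real.log (wbR d k))⁻¹ ≤ Real.exp (-(wbThr d γ k ^ γ)) := by
  have hL : 1 < Real.log (wbR d k) := wbR_log_gt_one d hd k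
  have hR : (0:ℝ) < wbR d k := lt_of_lt_of_le (by norm_num) (wbR_ge_three d hd k)
  have h1 : Real.exp (-(d * Real.log (wbR d k) + Real.log (Real.log (wbR d k))))
      ≤ Real.exp (-(wbThr d γ k ^ γ)) := by
    apply Real.exp_le_exp.2
    have := wbThr_rpow_le d hd hγ k
    linarith
  refine le_trans (le_of_eq ?_) h1
  rw [Real.exp_neg, Real.exp_add, Real.exp_nat_mul, Real.exp_log hR,
    Real.exp_log (by linarith : (0:ℝ) < Real.log (wbR d k))]

lemma wb_tsum_top {C : ℝ} (hC : 0 < C) : ∑' k : ℕ, ENNReal.ofReal (C / (k+1)) = ⊤ := by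
  by_contra h
  have hsum0 : Summable (fun k : ℕ => (ENNReal.ofReal (C / (k+1))).toReal) :=
    ENNReal.summable_toReal h
  have hsum : Summable (fun k : ℕ => C / (k+1)) := by
    refine hsum0.congr (fun k => ?_)
    rw [ENNReal.toReal_ofReal (by positivity)]
  have hsum2 : Summable (fun k : ℕ => 1 / ((k:ℝ)+1)) := by
    refine (hsum.mul_left C⁻¹).congr (fun k => ?_)
    field_simp
  have : Summable (fun n : ℕ => 1 / (n:ℝ)) := by
    refine (summable_nat_add_iff 1).mp ?_
    refine hsum2.congr (fun k => ?_)
    push_cast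
    ring
  exact Real.not_summable_one_div_natCast this

end WbAux

theorem weibull_field_max_lower_bound_infinitely_often
    {Ω : Type*} [MeasureSpace Ω] [IsProbabilityMeasure (ℙ : Measure Ω)]
    (d : ℕ) (hd : 1 ≤ d) (γ : ℝ) (hγ : γ ∈ Set.Ioc (0 : ℝ) 1)
    (ξ : (Fin d → ℤ) → Ω → ℝ) (hmeas : ∀ z, Measurable (ξ z))
    (hindep : iIndepFun ξ ℙ)
    (hdist : ∀ z, ∀ x : ℝ, 0 ≤ x → ℙ {ω | x < ξ z ω} = ENNReal.ofReal (Real.exp (-(x ^ γ)))) :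
    ∀ᵐ ω ∂ℙ, ∃ᶠ r : ℝ in atTop,
      ∃ z : Fin d → ℤ, latticeNorm z ≤ r ∧
        (d * Real.log r) ^ (1 / γ)
          + γ⁻¹ * (d * Real.log r) ^ (1 / γ - 1) * Real.log (Real.log r) ≤ ξ z ω := by
  classical
  set S : ℕ → Set ℝ := fun n =>
    if n.unpair.2 < (2 ^ n.unpair.1) ^ d then Set.Ioi (wbThr d γ n.unpair.1) else ∅ with hSdef
  have hSmeas : ∀ n, MeasurableSet (S n) := by
    intro n
    simp only [hSdef]
    split_ifs
    exacts [measurableSet_Ioi, MeasurableSet.empty]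
  set A : ℕ → Set Ω := fun n => ξ (wbEnum d n) ⁻¹' S n with hAdef
  have hAmeas : ∀ n, MeasurableSet (A n) := fun n => (hmeas _) (hSmeas n)
  have hAindep : iIndepSet A ℙ :=
    aux_iIndepSet_preimage ξ hmeas hindep (wbEnum d) (wbEnum_injective d hd) S hSmeas
  -- measure of good events
  have hAmeasure : ∀ n, n.unpair.2 < (2 ^ n.unpair.1) ^ d →
      ℙ (A n) = ENNReal.ofReal (Real.exp (-(wbThr d γ n.unpair.1 ^ γ))) := by
    intro n h
    have hset : A n = {ω | wbThr d γ n.unpair.1 < ξ (wbEnum d n) ω} := by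
      simp only [hAdef, hSdef]
      rw [if_pos h]
      rfl
    rw [hset, hdist _ _ (wbThr_nonneg d hd hγ _)]
  -- the sum of the probabilities diverges
  have hsum : (∑' n, ℙ (A n)) = ⊤ := by
    set C : ℝ := (((2 * d + 1 : ℝ)) ^ d * Real.log (2 * d + 1))⁻¹ with hCdef
    have hd1 : (1:ℝ) ≤ d := by exact_mod_cast hd
    have hlog21 : (0:ℝ) < Real.log (2 * d + 1) := Real.log_pos (by linarith)
    have hC : 0 < C := by
      rw [hCdef]
      have hpow : (0:ℝ) < (2 * d + 1 : ℝ) ^ d := by positivity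
      positivity
    -- per-index lower bound
    have hblock : ∀ k : ℕ, ∀ i : Fin ((2 ^ k) ^ d),
        ENNReal.ofReal (((wbR d k) ^ d * Real.log (wbR d k))⁻¹) ≤ ℙ (A (Nat.pair k i)) := by
      intro k i
      have hu : (Nat.pair k (i:ℕ)).unpair = (k, (i:ℕ)) := Nat.unpair_pair k i
      have hgood : (Nat.pair k (i:ℕ)).unpair.2 < (2 ^ (Nat.pair k (i:ℕ)).unpair.1) ^ d := by
        rw [hu]; exact i.isLt
      rw [hAmeasure _ hgood]
      apply ENNReal.ofReal_le_ofReal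
      have := wbExp_bound d hd hγ ((Nat.pair k (i:ℕ)).unpair.1)
      simpa [hu] using this
    -- real estimate per block
    have hharm : ∀ k : ℕ, C / (k+1)
        ≤ (((2 ^ k) ^ d : ℕ) : ℝ) * ((wbR d k) ^ d * Real.log (wbR d k))⁻¹ := by
      intro k
      have hL1 : 1 < Real.log (wbR d k) := wbR_log_gt_one d hd k
      have hL : (0:ℝ) < Real.log (wbR d k) := by linarith
      have hLle : Real.log (wbR d k) ≤ (k+1) * Real.log (2 * d + 1) := by
        rw [wbR, Real.log_mul (by positivity) (by positivity), Real.log_pow]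
        have h2 : Real.log 2 ≤ Real.log (2 * d + 1) := by
          apply Real.log_le_log (by norm_num)
          linarith
        have hk2 : (k:ℝ) * Real.log 2 ≤ (k:ℝ) * Real.log (2 * d + 1) :=
          mul_le_mul_of_nonneg_left h2 (by positivity)
        push_cast
        linarith
      have hP : (0:ℝ) < (2 * d + 1 : ℝ) ^ d := by positivity
      have hQ : (0:ℝ) < (2:ℝ) ^ (k * d) := by positivity
      have hNat : (((2 ^ k) ^ d : ℕ) : ℝ) = (2:ℝ) ^ (k * d) := by
        push_cast
        rw [← pow_mul]
      have hRpow : ((wbR d k) : ℝ) ^ d = (2 * d + 1 : ℝ) ^ d * (2:ℝ) ^ (k * d) := by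
        rw [wbR, mul_pow, ← pow_mul]
      rw [hNat, hRpow]
      have hRHS : (2:ℝ) ^ (k * d)
          * ((2 * d + 1 : ℝ) ^ d * (2:ℝ) ^ (k * d) * Real.log (wbR d k))⁻¹
          = ((2 * d + 1 : ℝ) ^ d * Real.log (wbR d k))⁻¹ := by
        rw [show (2 * d + 1 : ℝ) ^ d * (2:ℝ) ^ (k * d) * Real.log (wbR d k)
            = (2:ℝ) ^ (k * d) * ((2 * d + 1 : ℝ) ^ d * Real.log (wbR d k)) by ring,
          mul_inv, ← mul_assoc, mul_inv_cancel₀ hQ.ne', one_mul]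
      rw [hRHS]
      have hCk : C / (k+1) = ((2 * d + 1 : ℝ) ^ d * ((k+1) * Real.log (2 * d + 1)))⁻¹ := by
        rw [hCdef]
        rw [mul_inv, mul_inv, div_eq_mul_inv, mul_inv]
        ring
      rw [hCk]
      apply inv_anti₀
      · positivity
      · exact mul_le_mul_of_nonneg_left hLle hP.le
    -- block sums
    have hblock2 : ∀ k : ℕ, ENNReal.ofReal (C / (k+1))
        ≤ ∑' i : Fin ((2 ^ k) ^ d), ℙ (A (Nat.pair k i)) := by
      intro k
      rw [tsum_fintype]
      calc ENNReal.ofReal (C / (k+1))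
          ≤ ENNReal.ofReal ((((2 ^ k) ^ d : ℕ) : ℝ)
              * ((wbR d k) ^ d * Real.log (wbR d k))⁻¹) :=
            ENNReal.ofReal_le_ofReal (hharm k)
        _ = (((2 ^ k) ^ d : ℕ) : ENNReal)
              * ENNReal.ofReal (((wbR d k) ^ d * Real.log (wbR d k))⁻¹) := by
            rw [ENNReal.ofReal_mul (by positivity), ENNReal.ofReal_natCast]
        _ = ∑ _i : Fin ((2 ^ k) ^ d),
              ENNReal.ofReal (((wbR d k) ^ d * Real.log (wbR d k))⁻¹) := by
            rw [Finset.sum_const, Finset.card_univ, Fintype.card_fin, nsmul_eq_mul]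
        _ ≤ ∑ i : Fin ((2 ^ k) ^ d), ℙ (A (Nat.pair k i)) :=
            Finset.sum_le_sum (fun i _ => hblock k i)
    have hinj : Function.Injective
        (fun p : (Σ k : ℕ, Fin ((2 ^ k) ^ d)) => Nat.pair p.1 (p.2 : ℕ)) := by
      rintro ⟨k, i⟩ ⟨k', i'⟩ hp
      simp only at hp
      have h1 : (k, (i:ℕ)) = (k', (i':ℕ)) := by
        rw [← Nat.unpair_pair k (i:ℕ), ← Nat.unpair_pair k' (i':ℕ), hp]
      have hk : k = k' := congrArg Prod.fst h1
      subst hk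
      have hi : (i:ℕ) = (i':ℕ) := congrArg Prod.snd h1
      exact congrArg (Sigma.mk k) (Fin.ext hi)
    have hmain : (∑' k : ℕ, ENNReal.ofReal (C / (k+1))) ≤ ∑' n, ℙ (A n) :=
      calc (∑' k : ℕ, ENNReal.ofReal (C / (k+1)))
          ≤ ∑' k : ℕ, ∑' i : Fin ((2 ^ k) ^ d), ℙ (A (Nat.pair k i)) :=
            ENNReal.tsum_le_tsum hblock2
        _ = ∑' p : (Σ k : ℕ, Fin ((2 ^ k) ^ d)), ℙ (A (Nat.pair p.1 (p.2 : ℕ))) :=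
            (ENNReal.tsum_sigma'
              (fun p : (Σ k : ℕ, Fin ((2 ^ k) ^ d)) => ℙ (A (Nat.pair p.1 (p.2 : ℕ))))).symm
        _ ≤ ∑' n, ℙ (A n) := ENNReal.tsum_comp_le_tsum_of_injective hinj _
    rw [← top_le_iff, ← wb_tsum_top hC]
    exact hmain
  -- second Borel--Cantelli
  have hlimsup : ℙ (limsup A atTop) = 1 :=
    ProbabilityTheory.measure_limsup_eq_one hAmeas hAindep hsum
  have hmslim : MeasurableSet (limsup A atTop) :=
    MeasurableSet.measurableSet_limsup hAmeas
  have hae : ∀ᵐ ω ∂ℙ, ω ∈ limsup A atTop := by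
    rw [MeasureTheory.ae_iff]
    have : {ω | ¬ ω ∈ limsup A atTop} = (limsup A atTop)ᶜ := rfl
    rw [this, measure_compl hmslim (measure_ne_top _ _), hlimsup, measure_univ]
    simp
  filter_upwards [hae] with ω hω
  have hfreq : ∃ᶠ n in atTop, ω ∈ A n := mem_limsup_iff_frequently_mem.mp hω
  rw [Filter.frequently_atTop]
  intro b
  obtain ⟨K, hK⟩ := exists_nat_ge b
  -- find a good occurring index with large block
  have hinf : {n | ω ∈ A n}.Infinite := Nat.frequently_atTop_iff_infinite.mp hfreq
  have hexists : ∃ n, ω ∈ A n ∧ K ≤ n.unpair.1 := by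
    by_contra hcon
    push_neg at hcon
    have hsub : {n | ω ∈ A n} ⊆
        Nat.unpair ⁻¹' (Set.Iio K ×ˢ Set.Iio ((2 ^ K) ^ d)) := by
      intro n hn
      have hkK : n.unpair.1 < K := hcon n hn
      have hgood : n.unpair.2 < (2 ^ n.unpair.1) ^ d := by
        by_contra hbad
        have : A n = ∅ := by
          simp only [hAdef, hSdef]
          rw [if_neg hbad]
          exact Set.preimage_empty
        have hn' : ω ∈ A n := hn
        rw [this] at hn'
        exact hn'
      constructor
      · exact hkK
      · have : (2:ℕ) ^ n.unpair.1 ≤ 2 ^ K := Nat.pow_le_pow_right (by norm_num) hkK.le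
        calc n.unpair.2 < (2 ^ n.unpair.1) ^ d := hgood
          _ ≤ (2 ^ K) ^ d := Nat.pow_le_pow_left this d
    have hfin : (Nat.unpair ⁻¹' (Set.Iio K ×ˢ Set.Iio ((2 ^ K) ^ d))).Finite := by
      apply Set.Finite.preimage
      · intro a _ b _ hab
        rw [← Nat.pair_unpair a, hab, Nat.pair_unpair]
      · exact Set.Finite.prod (Set.finite_Iio K) (Set.finite_Iio _)
    exact hinf (hfin.subset hsub)
  obtain ⟨n, hωn, hKn⟩ := hexists
  have hgood : n.unpair.2 < (2 ^ n.unpair.1) ^ d := by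
    by_contra hbad
    have : A n = ∅ := by
      simp only [hAdef, hSdef]
      rw [if_neg hbad]
      exact Set.preimage_empty
    rw [this] at hωn
    exact hωn
  set k := n.unpair.1 with hkdef
  refine ⟨wbR d k, ?_, wbEnum d n, wbEnum_norm_le d n hgood, ?_⟩
  · -- b ≤ wbR d k
    have h1 : (K:ℝ) ≤ (k:ℝ) := by exact_mod_cast hKn
    have h2 : (k:ℝ) < 2 ^ k := by
      exact_mod_cast (Nat.lt_two_pow_self (n := k))
    have h3 : (2:ℝ) ^ k ≤ wbR d k := by
      rw [wbR]
      have hp : (0:ℝ) < 2 ^ k := by positivity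
      have : (1:ℝ) ≤ 2 * d + 1 := by
        have : (1:ℝ) ≤ d := by exact_mod_cast hd
        linarith
      nlinarith
    linarith
  · -- threshold bound
    have hmem : ω ∈ {ω | wbThr d γ k < ξ (wbEnum d n) ω} := by
      have hset : A n = {ω | wbThr d γ k < ξ (wbEnum d n) ω} := by
        simp only [hAdef, hSdef]
        rw [if_pos hgood]
        rfl
      rw [← hset]
      exact hωn
    exact le_of_lt hmem
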